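/- Consider the 2-response game with payoff matrix [[Ψ(1/2), Ψ(t)],[Ψ(1−t), Ψ(1/2)]] for some t ∈ (1/2, 1]. If every Nash equilibrium of this game has first-player strategy equal to δ₁, then Ψ(1−t) < Ψ(1/2) ≤ Ψ(t). -/

import Mathlib

open Finset

/-- A probability vector on `Fin n`. -/
def IsProb {n : ℕ} (π : Fin n → ℝ) : Prop := (∀ i, 0 ≤ π i) ∧ ∑ i, π i = 1

/-- Expected payoff of the two-player game with payoff matrix `A`. -/
def payoff {n : ℕ} (A : Fin n → Fin n → ℝ) (π π' : Fin n → ℝ) : ℝ :=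
  ∑ i, ∑ j, π i * π' j * A i j

/-- Nash equilibrium of the zero-sum game with payoff matrix `A`. -/
def IsNash {n : ℕ} (A : Fin n → Fin n → ℝ) (π₁ π₂ : Fin n → ℝ) : Prop :=
  IsProb π₁ ∧ IsProb π₂ ∧
  (∀ π, IsProb π → payoff A π π₂ ≤ payoff A π₁ π₂) ∧
  (∀ π', IsProb π' → payoff A π₁ π₂ ≤ payoff A π₁ π')

lemma payoff_expand (A : Fin 2 → Fin 2 → ℝ) (π π' : Fin 2 → ℝ) :
    payoff A π π' = π 0 * π' 0 * A 0 0 + π 0 * π' 1 * A 0 1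
      + π 1 * π' 0 * A 1 0 + π 1 * π' 1 * A 1 1 := by
  simp [payoff, Fin.sum_univ_two]; ring

lemma isProb_pair (x y : ℝ) (hx : 0 ≤ x) (hy : 0 ≤ y) (hxy : x + y = 1) :
    IsProb (![x, y]) := by
  constructor
  · intro i; fin_cases i <;> simpa
  · simp [Fin.sum_univ_two, hxy]

lemma isProb_sum (π : Fin 2 → ℝ) (h : IsProb π) : π 0 + π 1 = 1 := by
  have := h.2; simpa [Fin.sum_univ_two] using this

/-- Fully mixed Nash equilibrium when both off-diagonal deviations have the
same strict sign relative to `a`. -/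
lemma mixed_nash (a b c : ℝ) (A : Fin 2 → Fin 2 → ℝ)
    (h00 : A 0 0 = a) (h01 : A 0 1 = b) (h10 : A 1 0 = c) (h11 : A 1 1 = a)
    (h : (a < b ∧ a < c) ∨ (b < a ∧ c < a)) :
    IsNash A ![(c - a) / (b + c - 2 * a), (b - a) / (b + c - 2 * a)]
             ![(b - a) / (b + c - 2 * a), (c - a) / (b + c - 2 * a)] := by
  set s : ℝ := b + c - 2 * a with hs_def
  have hs : s ≠ 0 := by
    rcases h with ⟨h1, h2⟩ | ⟨h1, h2⟩ <;> (rw [hs_def]; intro hh) <;> nlinarith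
  have hp : 0 ≤ (c - a) / s := by
    rcases h with ⟨h1, h2⟩ | ⟨h1, h2⟩
    · exact le_of_lt (div_pos (by linarith) (by rw [hs_def]; linarith))
    · exact le_of_lt (div_pos_of_neg_of_neg (by linarith) (by rw [hs_def]; linarith))
  have hq : 0 ≤ (b - a) / s := by
    rcases h with ⟨h1, h2⟩ | ⟨h1, h2⟩
    · exact le_of_lt (div_pos (by linarith) (by rw [hs_def]; linarith))
    · exact le_of_lt (div_pos_of_neg_of_neg (by linarith) (by rw [hs_def]; linarith))
  have hsum : (c - a) / s + (b - a) / s = 1 := by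
    rw [← add_div, show c - a + (b - a) = s by rw [hs_def]; ring]
    exact div_self hs
  have hsum' : (b - a) / s + (c - a) / s = 1 := by linarith
  have hrow : ∀ π : Fin 2 → ℝ, π 0 + π 1 = 1 →
      payoff A π ![(b - a) / s, (c - a) / s] = (b * c - a ^ 2) / s := by
    intro π hπ
    rw [payoff_expand, h00, h01, h10, h11]
    simp only [Matrix.cons_val_zero, Matrix.cons_val_one, Matrix.head_cons]
    have e : π 0 * ((b - a) / s) * a + π 0 * ((c - a) / s) * b
        + π 1 * ((b - a) / s) * c + π 1 * ((c - a) / s) * a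
        = (π 0 + π 1) * ((b * c - a ^ 2) / s) := by
      field_simp
      ring
    rw [e, hπ, one_mul]
  have hcol : ∀ π' : Fin 2 → ℝ, π' 0 + π' 1 = 1 →
      payoff A ![(c - a) / s, (b - a) / s] π' = (b * c - a ^ 2) / s := by
    intro π' hπ'
    rw [payoff_expand, h00, h01, h10, h11]
    simp only [Matrix.cons_val_zero, Matrix.cons_val_one, Matrix.head_cons]
    have e : (c - a) / s * π' 0 * a + (c - a) / s * π' 1 * b
        + (b - a) / s * π' 0 * c + (b - a) / s * π' 1 * a
        = (π' 0 + π' 1) * ((b * c - a ^ 2) / s) := by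
      field_simp
      ring
    rw [e, hπ', one_mul]
  refine ⟨isProb_pair _ _ hp hq hsum, isProb_pair _ _ hq hp hsum', ?_, ?_⟩
  · intro π hπ
    rw [hrow π (isProb_sum π hπ), hrow _ (by simpa using hsum)]
  · intro π' hπ'
    rw [hcol π' (isProb_sum π' hπ'), hcol _ (by simpa using hsum')]

theorem stmt_1 (Ψ : ℝ → ℝ) (t : ℝ) (ht : 1 / 2 < t) (ht1 : t ≤ 1)
    (hUnique : ∀ π₁ π₂ : Fin 2 → ℝ,
      IsNash (fun i j => (!![Ψ (1 / 2), Ψ t; Ψ (1 - t), Ψ (1 / 2)] : Matrix (Fin 2) (Fin 2) ℝ) i j) π₁ π₂ →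
      π₁ = fun i => if i = 0 then 1 else 0) :
    Ψ (1 - t) < Ψ (1 / 2) ∧ Ψ (1 / 2) ≤ Ψ t := by
  set a := Ψ (1 / 2) with ha
  set b := Ψ t with hb
  set c := Ψ (1 - t) with hc
  set A : Fin 2 → Fin 2 → ℝ :=
    fun i j => (!![Ψ (1 / 2), Ψ t; Ψ (1 - t), Ψ (1 / 2)] : Matrix (Fin 2) (Fin 2) ℝ) i j with hA
  have h00 : A 0 0 = a := by simp [hA]; rw [ha]; norm_num
  have h01 : A 0 1 = b := by simp [hA]; rw [hb]
  have h10 : A 1 0 = c := by simp [hA]; rw [hc]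
  have h11 : A 1 1 = a := by simp [hA]; rw [ha]; norm_num
  -- any Nash equilibrium must have π₁ 1 = 0
  have key : ∀ π₁ π₂ : Fin 2 → ℝ, IsNash A π₁ π₂ → π₁ 1 = 0 := by
    intro π₁ π₂ hN
    have h := hUnique π₁ π₂ hN
    have : π₁ 1 = (fun i : Fin 2 => if i = 0 then 1 else (0:ℝ)) 1 := by rw [h]
    simpa using this
  -- mixed equilibrium contradiction
  have hmix : ¬ ((a < b ∧ a < c) ∨ (b < a ∧ c < a)) := by
    intro h
    have hN := mixed_nash a b c A h00 h01 h10 h11 h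
    have h1 := key _ _ hN
    simp only [Matrix.cons_val_one, Matrix.head_cons] at h1
    have hs : b + c - 2 * a ≠ 0 := by
      rcases h with ⟨h1', h2'⟩ | ⟨h1', h2'⟩ <;> intro hh <;> nlinarith
    have hba : b - a = 0 := by
      have := div_eq_zero_iff.mp h1
      tauto
    rcases h with ⟨h1', _⟩ | ⟨h1', _⟩ <;> nlinarith
  have hca : c < a := by
    by_contra hac
    push_neg at hac  -- a ≤ c
    rcases le_or_gt b a with hba | hab
    · -- pure (δ₁, δ₁) is Nash
      have hN : IsNash A ![0, 1] ![0, 1] := by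
        refine ⟨isProb_pair 0 1 le_rfl zero_le_one (by ring),
                isProb_pair 0 1 le_rfl zero_le_one (by ring), ?_, ?_⟩
        · intro π hπ
          rw [payoff_expand, payoff_expand, h00, h01, h10, h11]
          simp only [Matrix.cons_val_zero, Matrix.cons_val_one, Matrix.head_cons]
          have hsum := isProb_sum π hπ
          have e1 : (π 0 + π 1) * a = a := by rw [hsum, one_mul]
          have e2 : 0 ≤ π 0 * (a - b) := mul_nonneg (hπ.1 0) (by linarith)
          nlinarith [e1, e2]
        · intro π' hπ'
          rw [payoff_expand, payoff_expand, h00, h01, h10, h11]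
          simp only [Matrix.cons_val_zero, Matrix.cons_val_one, Matrix.head_cons]
          have hsum := isProb_sum π' hπ'
          have e1 : (π' 0 + π' 1) * a = a := by rw [hsum, one_mul]
          have e2 : 0 ≤ π' 0 * (c - a) := mul_nonneg (hπ'.1 0) (by linarith)
          nlinarith [e1, e2]
      have := key _ _ hN
      simp at this
    · -- a < b; if a < c, mixed contradiction; if a = c, pure (δ₁, δ₀)
      rcases lt_or_eq_of_le hac with hac' | hac'
      · exact hmix (Or.inl ⟨hab, hac'⟩)
      · -- a = c
        have hN : IsNash A ![0, 1] ![1, 0] := by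
          refine ⟨isProb_pair 0 1 le_rfl zero_le_one (by ring),
                  isProb_pair 1 0 zero_le_one le_rfl (by ring), ?_, ?_⟩
          · intro π hπ
            rw [payoff_expand, payoff_expand, h00, h01, h10, h11]
            simp only [Matrix.cons_val_zero, Matrix.cons_val_one, Matrix.head_cons]
            have hsum := isProb_sum π hπ
            have e1 : (π 0 + π 1) * c = c := by rw [hsum, one_mul]
            have e2 : π 0 * a = π 0 * c := by rw [hac']
            nlinarith [e1, e2]
          · intro π' hπ'
            rw [payoff_expand, payoff_expand, h00, h01, h10, h11]
            simp only [Matrix.cons_val_zero, Matrix.cons_val_one, Matrix.head_cons]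
            have hsum := isProb_sum π' hπ'
            have e1 : (π' 0 + π' 1) * c = c := by rw [hsum, one_mul]
            have e2 : π' 1 * a = π' 1 * c := by rw [hac']
            nlinarith [e1, e2]
        have := key _ _ hN
        simp at this
  refine ⟨hca, ?_⟩
  by_contra hab
  push_neg at hab  -- b < a
  exact hmix (Or.inr ⟨hab, hca⟩)
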